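/- Let 𝒜 be a p-S-ring over a finite p-group H, let T be a basic set, and let L ≤ H be a normal 𝒜-subgroup of order p with L not contained in rad(T). Then for every h ∈ T one has hL ∩ T = Lh ∩ T = {h}. -/

import Mathlib

open scoped Classical Pointwise

noncomputable section

variable {H : Type*}

/-- The simple quantity of a subset `T` of `H` in the group algebra `ℚ H`. -/
def simpleQ [Group H] [Fintype H] (T : Set H) : MonoidAlgebra ℚ H :=
  ∑ h ∈ T.toFinset, MonoidAlgebra.single h (1 : ℚ)

/-- An S-ring over a finite group `H`: a partition of `H` containing `{1}`,
closed under inversion, whose simple quantities span a subalgebra of `ℚ H`. -/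
structure SRing (H : Type*) [Group H] [Fintype H] where
  basicSets : Set (Set H)
  exists_unique_mem : ∀ h : H, ∃! T, T ∈ basicSets ∧ h ∈ T
  nonempty_of_mem : ∀ T ∈ basicSets, T.Nonempty
  one_mem : ({1} : Set H) ∈ basicSets
  inv_mem : ∀ T ∈ basicSets, T⁻¹ ∈ basicSets
  mul_mem : ∀ T ∈ basicSets, ∀ S ∈ basicSets,
    simpleQ T * simpleQ S ∈ Submodule.span ℚ (simpleQ '' basicSets)

namespace SRing

variable [Group H] [Fintype H]

/-- The underlying ℚ-subspace of the S-ring. -/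
def carrier (A : SRing H) : Submodule ℚ (MonoidAlgebra ℚ H) :=
  Submodule.span ℚ (simpleQ '' A.basicSets)

/-- `S` is an `𝒜`-subset: its simple quantity lies in `𝒜`. -/
def IsSubset (A : SRing H) (S : Set H) : Prop := simpleQ S ∈ A.carrier

/-- The thin radical of the S-ring. -/
def thin (A : SRing H) : Set H := {g | ({g} : Set H) ∈ A.basicSets}

end SRing

/-- The radical of a subset `S`: elements `h` with `hS = Sh = S`. -/
def radSet [Group H] (S : Set H) : Set H := {h | {h} * S = S ∧ S * {h} = S}

/-- The automorphism group of the Cayley digraph `Cay(H, T)`. -/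
def cayAut [Group H] (T : Set H) : Subgroup (Equiv.Perm H) where
  carrier := {g | ∀ x y : H, y * x⁻¹ ∈ T ↔ g y * (g x)⁻¹ ∈ T}
  one_mem' := by intro x y; simp
  mul_mem' := by
    intro a b ha hb x y
    simpa [Equiv.Perm.mul_apply] using (hb x y).trans (ha (b x) (b y))
  inv_mem' := by
    intro a ha x y
    simpa using (ha (a⁻¹ x) (a⁻¹ y)).symm

/-- The automorphism group of an S-ring. -/
def SRing.aut [Group H] [Fintype H] (A : SRing H) : Subgroup (Equiv.Perm H) :=
  ⨅ T ∈ A.basicSets, cayAut T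

/-- The right regular representation of `H` inside `Sym(H)`. -/
def rightRegular (H : Type*) [Group H] : Subgroup (Equiv.Perm H) where
  carrier := Set.range fun h : H => Equiv.mulRight h
  one_mem' := ⟨1, by ext x; simp⟩
  mul_mem' := by
    rintro _ _ ⟨a, rfl⟩ ⟨b, rfl⟩
    exact ⟨b * a, by ext x; simp [mul_assoc]⟩
  inv_mem' := by
    rintro _ ⟨a, rfl⟩
    exact ⟨a⁻¹, by ext x; simp⟩

/-- The orbit of `h` under the stabilizer of the identity in `G ≤ Sym(H)`. -/
def orbitOfStab [Group H] (G : Subgroup (Equiv.Perm H)) (h : H) : Set H :=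
  {x | ∃ g ∈ G, g 1 = 1 ∧ g h = x}

/-- A Schurian S-ring: its basic sets are the orbits of the identity-stabilizer
of some overgroup of the right regular representation. -/
def SRing.IsSchurian [Group H] [Fintype H] (A : SRing H) : Prop :=
  ∃ G : Subgroup (Equiv.Perm H), rightRegular H ≤ G ∧
    A.basicSets = {S | ∃ h : H, S = orbitOfStab G h}

/-- A p-S-ring: all basic sets have `p`-power size. -/
def SRing.IsPSRing [Group H] [Fintype H] (A : SRing H) (p : ℕ) : Prop :=
  ∀ T ∈ A.basicSets, ∃ k : ℕ, Nat.card T = p ^ k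

/-- A decomposable S-ring: a nontrivial `E/F`-wreath product. -/
def SRing.Decomposable [Group H] [Fintype H] (A : SRing H) : Prop :=
  ∃ E F : Subgroup H, F.Normal ∧ F ≤ E ∧ E ≠ ⊤ ∧ F ≠ ⊥ ∧
    A.IsSubset ↑E ∧ A.IsSubset ↑F ∧
    ∀ T ∈ A.basicSets, T ⊆ ((E : Set H))ᶜ → (F : Set H) ⊆ radSet T

/-- The 2-closure of a permutation group `G ≤ Sym(Ω)`: all permutations
preserving every `G`-orbit on `Ω × Ω`. -/
def twoClosure {Ω : Type*} (G : Subgroup (Equiv.Perm Ω)) : Subgroup (Equiv.Perm Ω) where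
  carrier := {γ | ∀ a b : Ω, ∃ g ∈ G, g a = γ a ∧ g b = γ b}
  one_mem' := fun a b => ⟨1, G.one_mem, rfl, rfl⟩
  mul_mem' := by
    intro γ δ hγ hδ a b
    obtain ⟨g, hg, hga, hgb⟩ := hδ a b
    obtain ⟨g', hg', hg'a, hg'b⟩ := hγ (δ a) (δ b)
    exact ⟨g' * g, G.mul_mem hg' hg, by simp [Equiv.Perm.mul_apply, hga, hg'a],
      by simp [Equiv.Perm.mul_apply, hgb, hg'b]⟩
  inv_mem' := by
    intro γ hγ a b
    obtain ⟨g, hg, hga, hgb⟩ := hγ (γ⁻¹ a) (γ⁻¹ b)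
    have h1 : g (γ⁻¹ a) = a := by rw [hga]; simp
    have h2 : g (γ⁻¹ b) = b := by rw [hgb]; simp
    refine ⟨g⁻¹, G.inv_mem hg, ?_, ?_⟩
    · exact g.injective (by rw [h1]; simp)
    · exact g.injective (by rw [h2]; simp)


section AuxLemmas

variable [Group H] [Fintype H]

lemma simpleQ_apply' (S : Set H) (x : H) :
    (simpleQ S).coeff x = if x ∈ S then 1 else 0 := by
  classical
  rw [simpleQ, MonoidAlgebra.coeff_sum, Finsupp.finset_sum_apply]
  simp [Finsupp.single_apply, MonoidAlgebra.coeff_single]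

/-- Elements of the carrier have coefficient functions constant on basic sets. -/
lemma coeff_const (A : SRing H) {a : MonoidAlgebra ℚ H} (ha : a ∈ A.carrier)
    {T : Set H} (hT : T ∈ A.basicSets) {x y : H} (hx : x ∈ T) (hy : y ∈ T) :
    a.coeff x = a.coeff y := by
  refine Submodule.span_induction (p := fun a _ => a.coeff x = a.coeff y) ?_ ?_ ?_ ?_ ha
  · rintro _ ⟨S, hS, rfl⟩
    rw [simpleQ_apply', simpleQ_apply']
    have hiff : x ∈ S ↔ y ∈ S := by
      constructor
      · intro hxS
        obtain ⟨U, hU, hUuniq⟩ := A.exists_unique_mem x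
        have h1 : S = U := hUuniq S ⟨hS, hxS⟩
        have h2 : T = U := hUuniq T ⟨hT, hx⟩
        rw [h1, ← h2]; exact hy
      · intro hyS
        obtain ⟨U, hU, hUuniq⟩ := A.exists_unique_mem y
        have h1 : S = U := hUuniq S ⟨hS, hyS⟩
        have h2 : T = U := hUuniq T ⟨hT, hy⟩
        rw [h1, ← h2]; exact hx
    simp [hiff]
  · simp
  · intro u v _ _ hu hv
    rw [MonoidAlgebra.coeff_add, Finsupp.add_apply, Finsupp.add_apply, hu, hv]
  · intro c u _ hu
    rw [MonoidAlgebra.coeff_smul_apply, MonoidAlgebra.coeff_smul_apply, hu]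

/-- The carrier is closed under left multiplication by a basic simple quantity. -/
lemma mul_carrier (A : SRing H) {T : Set H} (hT : T ∈ A.basicSets)
    {a : MonoidAlgebra ℚ H} (ha : a ∈ A.carrier) : simpleQ T * a ∈ A.carrier := by
  refine Submodule.span_induction (p := fun a _ => simpleQ T * a ∈ A.carrier) ?_ ?_ ?_ ?_ ha
  · rintro _ ⟨S, hS, rfl⟩
    exact A.mul_mem T hT S hS
  · simp [SRing.carrier]
  · intro u v _ _ hu hv
    rw [mul_add]; exact A.carrier.add_mem hu hv
  · intro c u _ hu
    rw [mul_smul_comm]; exact A.carrier.smul_mem c hu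

lemma mul_simpleQ_apply (T L : Set H) (x : H) :
    (simpleQ T * simpleQ L).coeff x
      = ((T.toFinset.filter (fun t => t⁻¹ * x ∈ L)).card : ℚ) := by
  classical
  rw [simpleQ, simpleQ, Finset.sum_mul_sum]
  simp_rw [MonoidAlgebra.single_mul_single, mul_one]
  rw [MonoidAlgebra.coeff_sum, Finsupp.finset_sum_apply]
  have : ∀ t ∈ T.toFinset,
      (∑ l ∈ L.toFinset, MonoidAlgebra.single (t * l) (1:ℚ)).coeff x
        = if t⁻¹ * x ∈ L then 1 else 0 := by
    intro t _
    rw [MonoidAlgebra.coeff_sum, Finsupp.finset_sum_apply]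
    have : ∀ l : H, (MonoidAlgebra.single (t * l) (1:ℚ)).coeff x
        = if l = t⁻¹ * x then 1 else 0 := by
      intro l
      rw [MonoidAlgebra.coeff_single, Finsupp.single_apply]
      congr 1
      simp [eq_comm, eq_inv_mul_iff_mul_eq]
    simp_rw [this]
    simp [Finset.sum_ite_eq', Set.mem_toFinset]
  rw [Finset.sum_congr rfl this, Finset.sum_ite, Finset.sum_const, Finset.sum_const]
  simp

end AuxLemmas

/-- a normal 𝒜-subgroup of order p not inside `rad T` meets each
translate of a point of `T` only in that point. -/
theorem stmt10 {H : Type*} [Group H] [Fintype H] {p : ℕ} (hp : p.Prime)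
    (hpH : IsPGroup p H) (A : SRing H) (hA : A.IsPSRing p)
    (T : Set H) (hT : T ∈ A.basicSets)
    (L : Subgroup H) (hLn : L.Normal) (hL : A.IsSubset ↑L)
    (hLcard : Nat.card L = p) (hrad : ¬ (L : Set H) ⊆ radSet T)
    (h : H) (hh : h ∈ T) :
    ((fun l => h * l) '' (L : Set H)) ∩ T = {h} ∧
    ((fun l => l * h) '' (L : Set H)) ∩ T = {h} := by
  classical
  -- the coefficient function
  set c : H → ℕ := fun x => (T.toFinset.filter (fun t => t⁻¹ * x ∈ (L : Set H))).card with hc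
  have hmem : simpleQ T * simpleQ (L : Set H) ∈ A.carrier := mul_carrier A hT hL
  have hconst : ∀ x ∈ T, ∀ y ∈ T, c x = c y := by
    intro x hx y hy
    have := coeff_const A hmem hT hx hy
    rw [mul_simpleQ_apply, mul_simpleQ_apply] at this
    exact_mod_cast this
  have hLcard' : ((L : Set H)).toFinset.card = p := by
    rw [Set.toFinset_card, ← Nat.card_eq_fintype_card]
    simpa using hLcard
  -- each coefficient is at most p
  have hle : ∀ x : H, c x ≤ p := by
    intro x
    rw [← hLcard']
    apply Finset.card_le_card_of_injOn (fun t => t⁻¹ * x)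
    · intro t ht
      simp only [Finset.coe_filter, Finset.mem_filter, Set.mem_setOf_eq] at ht
      simpa using ht.2
    · intro a _ b _ hab
      simp only at hab
      exact inv_injective (mul_right_cancel hab)
  -- c h divides |T|
  have hdvd : c h ∣ T.toFinset.card := by
    rw [Finset.card_eq_sum_card_fiberwise
      (f := fun t => (QuotientGroup.mk t : H ⧸ L)) (t := T.toFinset.image (fun t => (QuotientGroup.mk t : H ⧸ L)))
      (fun x hx => Finset.mem_image_of_mem _ hx)]
    refine Dvd.dvd.trans dvd_rfl (Finset.dvd_sum ?_)
    intro q hq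
    obtain ⟨t0, ht0, rfl⟩ := Finset.mem_image.mp hq
    have : (T.toFinset.filter (fun t => (QuotientGroup.mk t : H ⧸ L) = QuotientGroup.mk t0)).card = c t0 := by
      congr 1
      apply Finset.filter_congr
      intro t _
      rw [QuotientGroup.eq]
      simp
    rw [this, hconst t0 (Set.mem_toFinset.mp ht0) h hh]
  obtain ⟨k, hk⟩ := hA T hT
  have hTcard : T.toFinset.card = p ^ k := by
    rw [Set.toFinset_card, ← Nat.card_eq_fintype_card]
    simpa using hk
  rw [hTcard] at hdvd
  obtain ⟨j, hjk, hcj⟩ := (Nat.dvd_prime_pow hp).mp hdvd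
  have hc1p : c h = 1 ∨ c h = p := by
    rcases Nat.eq_zero_or_pos j with rfl | hj
    · left; simpa using hcj
    · right
      refine le_antisymm (hle h) ?_
      calc p = p ^ 1 := (pow_one p).symm
        _ ≤ p ^ j := Nat.pow_le_pow_right hp.one_le hj
        _ = c h := hcj.symm
  rcases hc1p with hc1 | hcp
  · -- c h = 1 : the desired conclusion
    have himg : (fun l => l * h) '' (L : Set H) = (fun l => h * l) '' (L : Set H) := by
      ext x
      constructor
      · rintro ⟨l, hl, rfl⟩
        exact ⟨h⁻¹ * l * h, by simpa using hLn.conj_mem l hl h⁻¹, by group⟩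
      · rintro ⟨l, hl, rfl⟩
        exact ⟨h * l * h⁻¹, hLn.conj_mem l hl h, by group⟩
    have hmain : ((fun l => h * l) '' (L : Set H)) ∩ T = {h} := by
      apply Set.eq_singleton_iff_unique_mem.mpr
      constructor
      · exact ⟨⟨1, L.one_mem, mul_one h⟩, hh⟩
      · rintro x ⟨⟨l, hl, rfl⟩, hxT⟩
        have hx1 : h * l ∈ T.toFinset.filter (fun t => t⁻¹ * h ∈ (L : Set H)) := by
          refine Finset.mem_filter.mpr ⟨Set.mem_toFinset.mpr hxT, ?_⟩
          have : (h * l)⁻¹ * h = l⁻¹ := by group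
          rw [this]; exact L.inv_mem hl
        have hx2 : h ∈ T.toFinset.filter (fun t => t⁻¹ * h ∈ (L : Set H)) := by
          refine Finset.mem_filter.mpr ⟨Set.mem_toFinset.mpr hh, by simpa using L.one_mem⟩
        exact Finset.card_le_one.mp (le_of_eq hc1) _ hx1 _ hx2
    exact ⟨hmain, himg ▸ hmain⟩
  · -- c h = p : contradicts L ⊄ rad T
    exfalso
    have key : ∀ t ∈ T, ∀ l ∈ L, t * l ∈ T := by
      intro t0 ht0 l hl
      have hct0 : c t0 = p := by rw [hconst t0 ht0 h hh, hcp]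
      set F := T.toFinset.filter (fun t => t⁻¹ * t0 ∈ (L : Set H)) with hF
      have himg : F.image (fun t => t⁻¹ * t0) = (L : Set H).toFinset := by
        apply Finset.eq_of_subset_of_card_le
        · intro x hx
          obtain ⟨t, ht, rfl⟩ := Finset.mem_image.mp hx
          exact Set.mem_toFinset.mpr (Finset.mem_filter.mp ht).2
        · rw [hLcard', Finset.card_image_of_injOn]
          · exact le_of_eq hct0.symm
          · intro a _ b _ hab
            simp only at hab
            exact inv_injective (mul_right_cancel hab)
      have : l⁻¹ ∈ F.image (fun t => t⁻¹ * t0) := by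
        rw [himg]; exact Set.mem_toFinset.mpr (L.inv_mem hl)
      obtain ⟨t, ht, hteq⟩ := Finset.mem_image.mp this
      have htT : t ∈ T := Set.mem_toFinset.mp (Finset.mem_filter.mp ht).1
      have : t = t0 * l := by
        have := congrArg (fun z => t * z * l) hteq
        simpa [mul_assoc] using this.symm
      rwa [← this]
    apply hrad
    intro l hl
    have hlL : l ∈ L := hl
    constructor
    · -- {l} * T = T
      ext x
      simp only [Set.singleton_mul, Set.mem_image]
      constructor
      · rintro ⟨t, ht, rfl⟩
        have : l * t = t * (t⁻¹ * l * t) := by group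
        rw [this]
        exact key t ht _ (by simpa using hLn.conj_mem l hlL t⁻¹)
      · intro hx
        refine ⟨l⁻¹ * x, ?_, by group⟩
        have : l⁻¹ * x = x * (x⁻¹ * l⁻¹ * x) := by group
        rw [this]
        exact key x hx _ (by simpa using hLn.conj_mem l⁻¹ (L.inv_mem hlL) x⁻¹)
    · -- T * {l} = T
      ext x
      simp only [Set.mul_singleton, Set.mem_image]
      constructor
      · rintro ⟨t, ht, rfl⟩
        exact key t ht l hlL
      · intro hx
        refine ⟨x * l⁻¹, key x hx l⁻¹ (L.inv_mem hlL), by group⟩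


end
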